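/- (Key algebraic identity of Theorem 3: the jump functions reduce to the whole-line reflection coefficients.) Let a, b, ã, b̃, A, B, Ã, B̃, ã^i, b^i, b̃^i, a^i : ℂ∖{0} → M₂(ℂ) take diagonal-matrix values and set s(z) = [[ã(z), b(z)],[b̃(z), a(z)]], S(z) = [[Ã(z), B(z)],[B̃(z), A(z)]], s^{int}(z) = [[ã^i(z), b^i(z)],[b̃^i(z), a^i(z)]] (4×4 block matrices). Assume for all z ≠ 0: (i) a(z) ã(z) − b(z) b̃(z) = I₂; (ii) s(z) = Σ s(1/z) Σ s^{int}(z); (iii) S(z) = Σ S(1/z) Σ; (iv) the global relations A(z) b(z) = B(z) a(z) and Ã(z) b̃(z) = B̃(z) ã(z); (v) the matrices a(z), ã(z), A(z), Ã(z), a^i(z), ã^i(z), d(z) := ã(z)A(z) − b̃(z)B(z) and d̃(z) := a(z)Ã(z) − b(z)B̃(z) are invertible. Then for all z ≠ 0: b̃(z) a(z)^{−1} − B̃(z) a(z)^{−1} d̃(z)^{−1} = b̃^i(z) (a^i(z))^{−1} and b(z) ã(z)^{−1} − B(z) ã(z)^{−1} d(z)^{−1} = b^i(z) (ã^i(z))^{−1}.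 -/

import Mathlib

noncomputable section

open Matrix

/-- `σ = [[0,1],[1,0]]`. -/
def sigmaM : Matrix (Fin 2) (Fin 2) ℂ := !![0, 1; 1, 0]

/-- `Σ = diag(σ, −σ)`. -/
def SigmaM : Matrix (Fin 2 ⊕ Fin 2) (Fin 2 ⊕ Fin 2) ℂ :=
  Matrix.fromBlocks sigmaM 0 0 (-sigmaM)

lemma emul {X Y : Matrix (Fin 2) (Fin 2) ℂ} (hX : X.IsDiag) (hY : Y.IsDiag) (i : Fin 2) :
    (X * Y) i i = X i i * Y i i := by
  rw [mul_apply]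
  rw [Finset.sum_eq_single i]
  · intro k _ hk; rw [hX (Ne.symm hk), zero_mul]
  · simp
lemma mulDiag {X Y : Matrix (Fin 2) (Fin 2) ℂ} (hX : X.IsDiag) (hY : Y.IsDiag) :
    (X * Y).IsDiag := by
  intro i j hij
  rw [mul_apply]
  apply Finset.sum_eq_zero
  intro k _
  rcases eq_or_ne i k with rfl | h
  · rw [hY hij, mul_zero]
  · rw [hX h, zero_mul]

lemma swap_apply (X : Matrix (Fin 2) (Fin 2) ℂ) (i j : Fin 2) :
    (sigmaM * X * sigmaM) i j = X (i+1) (j+1) := by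
  fin_cases i <;> fin_cases j <;>
    simp [sigmaM, mul_apply, vecMul, dotProduct, Fin.sum_univ_two]

lemma swapDiag {X : Matrix (Fin 2) (Fin 2) ℂ} (hX : X.IsDiag) :
    (sigmaM * X * sigmaM).IsDiag := by
  intro i j hij
  rw [swap_apply]
  exact hX (fun h => hij (by omega))


lemma invDiag {X : Matrix (Fin 2) (Fin 2) ℂ} (hX : X.IsDiag) : (X⁻¹).IsDiag := by
  rw [← hX.diagonal_diag, Matrix.inv_diagonal]
  exact isDiag_diagonal _

lemma entry_ne {X : Matrix (Fin 2) (Fin 2) ℂ} (hX : X.IsDiag) (hu : IsUnit X) (i : Fin 2) :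
    X i i ≠ 0 := by
  have hdet := (Matrix.isUnit_iff_isUnit_det X).mp hu
  rw [Matrix.det_fin_two, hX (show (0:Fin 2) ≠ 1 by decide),
    hX (show (1:Fin 2) ≠ 0 by decide)] at hdet
  simp only [zero_mul, mul_zero, sub_zero, isUnit_iff_ne_zero] at hdet
  fin_cases i <;> intro h <;> apply hdet <;> simp_all

lemma einv {X : Matrix (Fin 2) (Fin 2) ℂ} (hX : X.IsDiag) (hu : IsUnit X) (i : Fin 2) :
    (X⁻¹) i i = (X i i)⁻¹ := by
  have h := Matrix.nonsing_inv_mul X ((Matrix.isUnit_iff_isUnit_det X).mp hu)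
  have h2 := congrArg (fun M => M i i) h
  simp only [Matrix.one_apply_eq] at h2
  rw [emul (invDiag hX) hX] at h2
  exact eq_inv_of_mul_eq_one_left h2

lemma scalar_key (a b ta tb tA tB ai bi tai tbi a' b' ta' tb' tA' tB' : ℂ)
    (hdet : a * ta - b * tb = 1) (hdet' : a' * ta' - b' * tb' = 1)
    (E2 : ta = ta' * tai - b' * tbi) (E3 : b = ta' * bi - b' * ai)
    (E4 : tb = a' * tbi - tb' * tai) (E5 : a = a' * ai - tb' * bi)
    (E6tA : tA = tA') (E6tB : tB = -tB')
    (hgr2' : tA' * tb' = tB' * ta')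
    (ha : a ≠ 0) (hai : ai ≠ 0) (hd : a * tA - b * tB ≠ 0) :
    tb * a⁻¹ - tB * a⁻¹ * (a * tA - b * tB)⁻¹ = tbi * ai⁻¹ := by
  have detint : ai * tai - bi * tbi = 1 := by
    rw [E2, E3, E4, E5] at hdet
    linear_combination hdet - (ai * tai - bi * tbi) * hdet'
  have k1 : tb * ai - a * tbi = -tb' := by
    rw [E4, E5]
    linear_combination (-tb') * detint
  have k1' : ai = ta' * a + tb' * b := by
    rw [E3, E5]
    linear_combination (-ai) * hdet'
  have key : tb * (a * tA - b * tB) * ai - tB * ai = tbi * (a * (a * tA - b * tB)) := by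
    linear_combination (a * tA - b * tB) * k1 + tB' * k1' - a * hgr2' - a * tb' * E6tA
      + (b * tb' - ai) * E6tB
  generalize a * tA - b * tB = d at hd key ⊢
  field_simp
  linear_combination key


lemma entry_comb {P Q R S T : Matrix (Fin 2) (Fin 2) ℂ} (hE : T = P * Q - R * S)
    (hP : P.IsDiag) (hQ : Q.IsDiag) (hR : R.IsDiag) (hS : S.IsDiag) (i : Fin 2) :
    T i i = P i i * Q i i - R i i * S i i := by
  rw [hE, Matrix.sub_apply, emul hP hQ, emul hR hS]

lemma entry_det {X Y U V : Matrix (Fin 2) (Fin 2) ℂ} (h : X * Y - U * V = 1)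
    (hX : X.IsDiag) (hY : Y.IsDiag) (hU : U.IsDiag) (hV : V.IsDiag) (i : Fin 2) :
    X i i * Y i i - U i i * V i i = 1 := by
  rw [← emul hX hY, ← emul hU hV, ← Matrix.sub_apply, h, Matrix.one_apply_eq]

lemma entry_gr {X Y U V : Matrix (Fin 2) (Fin 2) ℂ} (h : X * Y = U * V)
    (hX : X.IsDiag) (hY : Y.IsDiag) (hU : U.IsDiag) (hV : V.IsDiag) (i : Fin 2) :
    X i i * Y i i = U i i * V i i := by
  rw [← emul hX hY, ← emul hU hV, h]

/-- Key algebraic identity of Theorem 3: under the symmetries and global relations,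
the jump functions `γ̃ − Γ` and `γ − Γ̃` reduce to the whole-line reflection
coefficients `b̃^{int}(a^{int})⁻¹` and `b^{int}(ã^{int})⁻¹`. -/
theorem stmt11
    (a b ta tb A B tA tB ai bi tai tbi : ℂ → Matrix (Fin 2) (Fin 2) ℂ)
    (hdiag : ∀ z : ℂ, z ≠ 0 →
      (a z).IsDiag ∧ (b z).IsDiag ∧ (ta z).IsDiag ∧ (tb z).IsDiag ∧
      (A z).IsDiag ∧ (B z).IsDiag ∧ (tA z).IsDiag ∧ (tB z).IsDiag ∧
      (ai z).IsDiag ∧ (bi z).IsDiag ∧ (tai z).IsDiag ∧ (tbi z).IsDiag)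
    -- (i) the determinant relation
    (hdet : ∀ z : ℂ, z ≠ 0 → a z * ta z - b z * tb z = 1)
    -- (ii) s(z) = Σ s(1/z) Σ s^{int}(z)
    (hs : ∀ z : ℂ, z ≠ 0 →
      Matrix.fromBlocks (ta z) (b z) (tb z) (a z) =
        SigmaM * Matrix.fromBlocks (ta z⁻¹) (b z⁻¹) (tb z⁻¹) (a z⁻¹) * SigmaM
          * Matrix.fromBlocks (tai z) (bi z) (tbi z) (ai z))
    -- (iii) S(z) = Σ S(1/z) Σ
    (hS : ∀ z : ℂ, z ≠ 0 →
      Matrix.fromBlocks (tA z) (B z) (tB z) (A z) =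
        SigmaM * Matrix.fromBlocks (tA z⁻¹) (B z⁻¹) (tB z⁻¹) (A z⁻¹) * SigmaM)
    -- (iv) the global relations
    (hgr1 : ∀ z : ℂ, z ≠ 0 → A z * b z = B z * a z)
    (hgr2 : ∀ z : ℂ, z ≠ 0 → tA z * tb z = tB z * ta z)
    -- (v) invertibility
    (hunit : ∀ z : ℂ, z ≠ 0 →
      IsUnit (a z) ∧ IsUnit (ta z) ∧ IsUnit (A z) ∧ IsUnit (tA z) ∧
      IsUnit (ai z) ∧ IsUnit (tai z) ∧
      IsUnit (ta z * A z - tb z * B z) ∧ IsUnit (a z * tA z - b z * tB z)) :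
    ∀ z : ℂ, z ≠ 0 →
      (tb z * (a z)⁻¹ - tB z * (a z)⁻¹ * (a z * tA z - b z * tB z)⁻¹ =
        tbi z * (ai z)⁻¹) ∧
      (b z * (ta z)⁻¹ - B z * (ta z)⁻¹ * (ta z * A z - tb z * B z)⁻¹ =
        bi z * (tai z)⁻¹) := by
  intro z hz
  have hz' : z⁻¹ ≠ 0 := inv_ne_zero hz
  obtain ⟨da, db, dta, dtb, dA, dB, dtA, dtB, dai, dbi, dtai, dtbi⟩ := hdiag z hz
  obtain ⟨da', db', dta', dtb', dA', dB', dtA', dtB', dai', dbi', dtai', dtbi'⟩ := hdiag z⁻¹ hz'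
  obtain ⟨ua, uta, uA, utA, uai, utai, ud, ud'⟩ := hunit z hz
  -- block equations from hs
  have hsz := hs z hz
  rw [SigmaM, Matrix.fromBlocks_multiply, Matrix.fromBlocks_multiply,
    Matrix.fromBlocks_multiply] at hsz
  have B11 := congrArg Matrix.toBlocks₁₁ hsz
  have B12 := congrArg Matrix.toBlocks₁₂ hsz
  have B21 := congrArg Matrix.toBlocks₂₁ hsz
  have B22 := congrArg Matrix.toBlocks₂₂ hsz
  simp only [Matrix.toBlocks_fromBlocks₁₁, Matrix.toBlocks_fromBlocks₁₂,
    Matrix.toBlocks_fromBlocks₂₁, Matrix.toBlocks_fromBlocks₂₂,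
    Matrix.zero_mul, Matrix.mul_zero, zero_add, add_zero,
    Matrix.neg_mul, Matrix.mul_neg, neg_neg] at B11 B12 B21 B22
  rw [← sub_eq_add_neg] at B11 B12
  rw [neg_add_eq_sub] at B21 B22
  -- block equations from hS
  have hSz := hS z hz
  rw [SigmaM, Matrix.fromBlocks_multiply, Matrix.fromBlocks_multiply] at hSz
  have S11 := congrArg Matrix.toBlocks₁₁ hSz
  have S12 := congrArg Matrix.toBlocks₁₂ hSz
  have S21 := congrArg Matrix.toBlocks₂₁ hSz
  have S22 := congrArg Matrix.toBlocks₂₂ hSz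
  simp only [Matrix.toBlocks_fromBlocks₁₁, Matrix.toBlocks_fromBlocks₁₂,
    Matrix.toBlocks_fromBlocks₂₁, Matrix.toBlocks_fromBlocks₂₂,
    Matrix.zero_mul, Matrix.mul_zero, zero_add, add_zero,
    Matrix.neg_mul, Matrix.mul_neg, neg_neg] at S11 S12 S21 S22
  -- diagonality of derived matrices
  have dd' : (a z * tA z - b z * tB z).IsDiag := (mulDiag da dtA).sub (mulDiag db dtB)
  have dd : (ta z * A z - tb z * B z).IsDiag := (mulDiag dta dA).sub (mulDiag dtb dB)
  -- scalar equations
  have sdet := entry_det (hdet z hz) da dta db dtb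
  have sdet' := entry_det (hdet z⁻¹ hz') da' dta' db' dtb'
  have sgr1' := entry_gr (hgr1 z⁻¹ hz') dA' db' dB' da'
  have sgr2' := entry_gr (hgr2 z⁻¹ hz') dtA' dtb' dtB' dta'
  have sE2 := fun i => entry_comb B11 (swapDiag dta') dtai (swapDiag db') dtbi i
  have sE3 := fun i => entry_comb B12 (swapDiag dta') dbi (swapDiag db') dai i
  have sE4 := fun i => entry_comb B21 (swapDiag da') dtbi (swapDiag dtb') dtai i
  have sE5 := fun i => entry_comb B22 (swapDiag da') dai (swapDiag dtb') dbi i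
  simp only [swap_apply] at sE2 sE3 sE4 sE5
  have sS11 := fun i : Fin 2 => congrArg (fun M => M i i) S11
  have sS12 := fun i : Fin 2 => congrArg (fun M => M i i) S12
  have sS21 := fun i : Fin 2 => congrArg (fun M => M i i) S21
  have sS22 := fun i : Fin 2 => congrArg (fun M => M i i) S22
  simp only [Matrix.neg_apply, swap_apply] at sS11 sS12 sS21 sS22
  constructor
  · ext i j
    rcases eq_or_ne i j with rfl | hij
    · -- diagonal entry
      have hdE : (a z * tA z - b z * tB z) i i = a z i i * tA z i i - b z i i * tB z i i := by
        rw [Matrix.sub_apply, emul da dtA, emul db dtB]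
      have lhs_eq : (tb z * (a z)⁻¹ - tB z * (a z)⁻¹ * (a z * tA z - b z * tB z)⁻¹) i i
          = tb z i i * (a z i i)⁻¹
            - tB z i i * (a z i i)⁻¹ * (a z i i * tA z i i - b z i i * tB z i i)⁻¹ := by
        rw [Matrix.sub_apply, emul dtb (invDiag da),
          emul (mulDiag dtB (invDiag da)) (invDiag dd'), emul dtB (invDiag da),
          einv da ua, einv dd' ud', hdE]
      have rhs_eq : (tbi z * (ai z)⁻¹) i i = tbi z i i * (ai z i i)⁻¹ := by
        rw [emul dtbi (invDiag dai), einv dai uai]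
      rw [lhs_eq, rhs_eq]
      have hd : a z i i * tA z i i - b z i i * tB z i i ≠ 0 := by
        rw [← hdE]; exact entry_ne dd' ud' i
      exact scalar_key (a z i i) (b z i i) (ta z i i) (tb z i i) (tA z i i) (tB z i i)
        (ai z i i) (bi z i i) (tai z i i) (tbi z i i)
        (a z⁻¹ (i+1) (i+1)) (b z⁻¹ (i+1) (i+1)) (ta z⁻¹ (i+1) (i+1)) (tb z⁻¹ (i+1) (i+1))
        (tA z⁻¹ (i+1) (i+1)) (tB z⁻¹ (i+1) (i+1))
        (sdet i) (sdet' (i+1)) (sE2 i) (sE3 i) (sE4 i) (sE5 i)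
        (sS11 i) (sS21 i) (sgr2' (i+1))
        (entry_ne da ua i) (entry_ne dai uai i) hd
    · -- off-diagonal entry
      have dl : (tb z * (a z)⁻¹ - tB z * (a z)⁻¹ * (a z * tA z - b z * tB z)⁻¹).IsDiag :=
        (mulDiag dtb (invDiag da)).sub
          (mulDiag (mulDiag dtB (invDiag da)) (invDiag dd'))
      have dr : (tbi z * (ai z)⁻¹).IsDiag := mulDiag dtbi (invDiag dai)
      rw [dl hij, dr hij]
  · ext i j
    rcases eq_or_ne i j with rfl | hij
    · have hdE : (ta z * A z - tb z * B z) i i = ta z i i * A z i i - tb z i i * B z i i := by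
        rw [Matrix.sub_apply, emul dta dA, emul dtb dB]
      have lhs_eq : (b z * (ta z)⁻¹ - B z * (ta z)⁻¹ * (ta z * A z - tb z * B z)⁻¹) i i
          = b z i i * (ta z i i)⁻¹
            - B z i i * (ta z i i)⁻¹ * (ta z i i * A z i i - tb z i i * B z i i)⁻¹ := by
        rw [Matrix.sub_apply, emul db (invDiag dta),
          emul (mulDiag dB (invDiag dta)) (invDiag dd), emul dB (invDiag dta),
          einv dta uta, einv dd ud, hdE]
      have rhs_eq : (bi z * (tai z)⁻¹) i i = bi z i i * (tai z i i)⁻¹ := by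
        rw [emul dbi (invDiag dtai), einv dtai utai]
      rw [lhs_eq, rhs_eq]
      have hd : ta z i i * A z i i - tb z i i * B z i i ≠ 0 := by
        rw [← hdE]; exact entry_ne dd ud i
      have sdetc : ta z i i * a z i i - tb z i i * b z i i = 1 := by
        linear_combination sdet i
      have sdetc' : ta z⁻¹ (i+1) (i+1) * a z⁻¹ (i+1) (i+1)
          - tb z⁻¹ (i+1) (i+1) * b z⁻¹ (i+1) (i+1) = 1 := by
        linear_combination sdet' (i+1)
      exact scalar_key (ta z i i) (tb z i i) (a z i i) (b z i i) (A z i i) (B z i i)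
        (tai z i i) (tbi z i i) (ai z i i) (bi z i i)
        (ta z⁻¹ (i+1) (i+1)) (tb z⁻¹ (i+1) (i+1)) (a z⁻¹ (i+1) (i+1)) (b z⁻¹ (i+1) (i+1))
        (A z⁻¹ (i+1) (i+1)) (B z⁻¹ (i+1) (i+1))
        sdetc sdetc' (sE5 i) (sE4 i) (sE3 i) (sE2 i)
        (sS22 i) (sS12 i) (sgr1' (i+1))
        (entry_ne dta uta i) (entry_ne dtai utai i) hd
    · have dl : (b z * (ta z)⁻¹ - B z * (ta z)⁻¹ * (ta z * A z - tb z * B z)⁻¹).IsDiag :=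
        (mulDiag db (invDiag dta)).sub
          (mulDiag (mulDiag dB (invDiag dta)) (invDiag dd))
      have dr : (bi z * (tai z)⁻¹).IsDiag := mulDiag dbi (invDiag dtai)
      rw [dl hij, dr hij]

end
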